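/- Let n ≥ 1 and let α_1, …, α_n be rational numbers such that ∑_{j=1}^n α_j·√(j² + x²) = 0 for every real number x. Then α_j = 0 for all j = 1, …, n. Equivalently, the real-valued functions x ↦ √(j² + x²), j = 1, …, n, are linearly independent over ℚ. -/

import Mathlib

open Filter Topology Set

lemma my_analyticAt_sqrt {x : ℝ} (hx : 0 < x) : AnalyticAt ℝ Real.sqrt x := by
  have h1 : AnalyticAt ℝ (fun y : ℝ => (Complex.reCLM ((y : ℂ) ^ (1/2 : ℂ)))) x := by
    apply (Complex.reCLM.analyticAt _).comp
    have h2 : AnalyticAt ℂ (fun z : ℂ => z ^ (1/2 : ℂ)) (x : ℂ) :=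
      analyticAt_id.cpow analyticAt_const (Complex.ofReal_mem_slitPlane.2 hx)
    exact (h2.restrictScalars).comp (Complex.ofRealCLM.analyticAt _)
  apply h1.congr
  filter_upwards [eventually_gt_nhds hx] with y hy
  rw [show (1/2 : ℂ) = ((1/2 : ℝ) : ℂ) by norm_num, ← Complex.ofReal_cpow hy.le]
  simp [Real.sqrt_eq_rpow]

theorem stmt_6 (n : ℕ) (hn : 1 ≤ n) (α : Fin n → ℚ)
    (h : ∀ x : ℝ,
      ∑ j : Fin n, (α j : ℝ) * Real.sqrt (((j : ℕ) + 1 : ℝ) ^ 2 + x ^ 2) = 0) :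
    ∀ j, α j = 0 := by
  set g : ℝ → ℝ := fun t => ∑ k : Fin n, (α k : ℝ) * Real.sqrt (((k : ℕ) + 1 : ℝ) ^ 2 + t)
    with hgdef
  have hg0 : ∀ t : ℝ, 0 ≤ t → g t = 0 := by
    intro t ht
    have := h (Real.sqrt t)
    rwa [Real.sq_sqrt ht] at this
  suffices H : ∀ m : ℕ, ∀ j : Fin n, (j : ℕ) = m → α j = 0 by
    intro j; exact H j j rfl
  intro m
  induction m using Nat.strong_induction_on with
  | _ m IH =>
  intro j hj
  have hIH : ∀ k : Fin n, (k : ℕ) < m → (α k : ℝ) = 0 := by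
    intro k hk; rw [IH _ hk k rfl]; exact Rat.cast_zero
  set K : ℝ := ((j : ℕ) : ℝ) + 1 with hKdef
  have hK : 0 < K := by positivity
  -- any index with k ≥ m has (k+1) ≥ K
  have hge : ∀ k : Fin n, ¬ ((k : ℕ) < m) → K ≤ ((k : ℕ) : ℝ) + 1 := by
    intro k hk
    have : (j : ℕ) ≤ (k : ℕ) := by omega
    have : ((j : ℕ) : ℝ) ≤ ((k : ℕ) : ℝ) := by exact_mod_cast this
    linarith
  have hpos : ∀ (k : Fin n), ¬ ((k : ℕ) < m) → ∀ t ∈ Ioi (-K ^ 2),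
      0 < (((k : ℕ) : ℝ) + 1) ^ 2 + t := by
    intro k hk t ht
    have h1 : K ^ 2 ≤ (((k : ℕ) : ℝ) + 1) ^ 2 := by
      have := hge k hk
      nlinarith
    have ht' : -K ^ 2 < t := ht
    nlinarith
  -- g is analytic on Ioi (-K^2)
  have hana : AnalyticOnNhd ℝ g (Ioi (-K ^ 2)) := by
    intro t ht
    apply Finset.analyticAt_fun_sum
    intro k _
    by_cases hk : (k : ℕ) < m
    · simp only [hIH k hk, zero_mul]
      exact analyticAt_const
    · have hp := hpos k hk t ht
      exact analyticAt_const.mul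
        ((my_analyticAt_sqrt hp).comp (analyticAt_const.add analyticAt_id))
  -- identity theorem: g = 0 on Ioi (-K^2)
  have hEq : EqOn g 0 (Ioi (-K ^ 2)) := by
    apply hana.eqOn_zero_of_preconnected_of_eventuallyEq_zero isPreconnected_Ioi
      (z₀ := (1 : ℝ))
    · show -K ^ 2 < 1
      nlinarith
    · filter_upwards [eventually_gt_nhds (zero_lt_one : (0:ℝ) < 1)] with y hy
      exact hg0 y hy.le
  -- derivative of g vanishes on Ioi (-K^2)
  have hderiv : ∀ t ∈ Ioi (-K ^ 2),
      ∑ k : Fin n, (α k : ℝ) * (1 / (2 * Real.sqrt ((((k : ℕ) : ℝ) + 1) ^ 2 + t))) = 0 := by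
    intro t ht
    have hd : HasDerivAt g
        (∑ k : Fin n, (α k : ℝ) * (1 / (2 * Real.sqrt ((((k : ℕ) : ℝ) + 1) ^ 2 + t)))) t := by
      apply HasDerivAt.fun_sum
      intro k _
      by_cases hk : (k : ℕ) < m
      · simp only [hIH k hk, zero_mul]
        exact hasDerivAt_const t 0
      · have hp := hpos k hk t ht
        have h1 : HasDerivAt (fun s : ℝ => (((k : ℕ) : ℝ) + 1) ^ 2 + s) 1 t :=
          (hasDerivAt_id t).const_add _
        have h2 := (Real.hasDerivAt_sqrt hp.ne').comp t h1
        have h3 : HasDerivAt (fun s : ℝ => Real.sqrt ((((k : ℕ) : ℝ) + 1) ^ 2 + s))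
            (1 / (2 * Real.sqrt ((((k : ℕ) : ℝ) + 1) ^ 2 + t))) t := by
          simpa [Function.comp_def] using h2
        exact h3.const_mul _
    have hz : HasDerivAt g 0 t := by
      have hev : g =ᶠ[𝓝 t] (fun _ => (0:ℝ)) := by
        filter_upwards [isOpen_Ioi.mem_nhds ht] with y hy
        exact hEq hy
      exact (hasDerivAt_const t (0:ℝ)).congr_of_eventuallyEq hev
    exact hd.unique hz
  -- multiply by sqrt (K^2 + t) and take the limit t → -K^2 from the right
  set F : ℝ → ℝ := fun t => ∑ k : Fin n,
    (α k : ℝ) * (Real.sqrt (K ^ 2 + t) / (2 * Real.sqrt ((((k : ℕ) : ℝ) + 1) ^ 2 + t)))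
    with hFdef
  have hF0 : ∀ t ∈ Ioi (-K ^ 2), F t = 0 := by
    intro t ht
    have : F t = Real.sqrt (K ^ 2 + t) *
        ∑ k : Fin n, (α k : ℝ) * (1 / (2 * Real.sqrt ((((k : ℕ) : ℝ) + 1) ^ 2 + t))) := by
      rw [Finset.mul_sum]
      apply Finset.sum_congr rfl
      intro k _
      ring
    rw [this, hderiv t ht, mul_zero]
  have hlim : Tendsto F (𝓝[>] (-K ^ 2)) (𝓝 ((α j : ℝ) * (1/2))) := by
    have hsum : Tendsto F (𝓝[>] (-K ^ 2))
        (𝓝 (∑ k : Fin n, if k = j then (α j : ℝ) * (1/2) else 0)) := by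
      apply tendsto_finset_sum
      intro k _
      by_cases hkj : k = j
      · subst hkj
        simp only [if_pos rfl]
        apply Tendsto.congr' _ tendsto_const_nhds
        filter_upwards [self_mem_nhdsWithin] with t ht
        have hp : 0 < K ^ 2 + t := by
          have : -K ^ 2 < t := ht
          linarith
        have hs : 0 < Real.sqrt (K ^ 2 + t) := Real.sqrt_pos.2 hp
        show (α k : ℝ) * (1/2) =
          (α k : ℝ) * (Real.sqrt (K ^ 2 + t) / (2 * Real.sqrt (K ^ 2 + t)))
        have h12 : Real.sqrt (K ^ 2 + t) / (2 * Real.sqrt (K ^ 2 + t)) = 1/2 := by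
          rw [div_eq_iff (by positivity)]; ring
        rw [h12]
      · simp only [if_neg hkj]
        by_cases hk : (k : ℕ) < m
        · apply Tendsto.congr' _ tendsto_const_nhds
          filter_upwards with t
          rw [hIH k hk, zero_mul]
        · -- (k+1) > K since k ≠ j, k ≥ m
          have hkK : K < ((k : ℕ) : ℝ) + 1 := by
            have h1 : (j : ℕ) < (k : ℕ) := by
              rcases lt_or_eq_of_le (show (j:ℕ) ≤ (k:ℕ) by omega) with h' | h'
              · exact h'
              · exact absurd (Fin.ext h').symm hkj
            have : ((j : ℕ) : ℝ) < ((k : ℕ) : ℝ) := by exact_mod_cast h1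
            rw [hKdef]; linarith
          have hd : 0 < (((k : ℕ) : ℝ) + 1) ^ 2 + (-K ^ 2) := by nlinarith
          have hc : ContinuousAt
              (fun t : ℝ => (α k : ℝ) *
                (Real.sqrt (K ^ 2 + t) / (2 * Real.sqrt ((((k : ℕ) : ℝ) + 1) ^ 2 + t))))
              (-K ^ 2) := by
            apply ContinuousAt.mul continuousAt_const
            apply ContinuousAt.div
            · exact (Real.continuous_sqrt.comp (continuous_const.add continuous_id)).continuousAt
            · exact (continuous_const.mul
                (Real.continuous_sqrt.comp (continuous_const.add continuous_id))).continuousAt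
            · have : 0 < Real.sqrt ((((k : ℕ) : ℝ) + 1) ^ 2 + (-K ^ 2)) := Real.sqrt_pos.2 hd
              positivity
          have := hc.tendsto.mono_left (nhdsWithin_le_nhds (s := Ioi (-K ^ 2)))
          convert this using 2
          rw [show K ^ 2 + (-K ^ 2) = 0 by ring, Real.sqrt_zero, zero_div, mul_zero]
    have : (∑ k : Fin n, if k = j then (α j : ℝ) * (1/2) else 0) = (α j : ℝ) * (1/2) := by
      simp [Finset.sum_ite_eq']
    rwa [this] at hsum
  have hzlim : Tendsto F (𝓝[>] (-K ^ 2)) (𝓝 0) := by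
    apply Tendsto.congr' _ tendsto_const_nhds
    filter_upwards [self_mem_nhdsWithin] with t ht
    exact (hF0 t ht).symm
  have := tendsto_nhds_unique hlim hzlim
  have : (α j : ℝ) = 0 := by linarith
  exact_mod_cast this
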